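/- Two real representations ρ₁ and ρ₂ of a finite group G are stably equivalent if and only if they contain the same non-trivial irreducible factors, i.e. Irr_ℝ(ρ₁) \ {1_G} = Irr_ℝ(ρ₂) \ {1_G}. -/

import Mathlib

open Finset

variable {G : Type} [Group G] [Fintype G]

/-- The affine kernel `ker°ρ` of a real representation `ρ` of `G`:
families `(λ_g)` with `∑ λ_g ρ(g) = 0` and `∑ λ_g = 0`. -/
def affKer {V : Type} [AddCommGroup V] [Module ℝ V]
    (ρ : Representation ℝ G V) : Set (G → ℝ) :=
  {l | (∑ g : G, l g • (ρ g : V →ₗ[ℝ] V)) = 0 ∧ (∑ g : G, l g) = 0}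

/-- Direct sum (realized on the product space) of two representations. -/
def prodRep {V W : Type} [AddCommGroup V] [Module ℝ V] [AddCommGroup W] [Module ℝ W]
    (ρ : Representation ℝ G V) (σ : Representation ℝ G W) :
    Representation ℝ G (V × W) where
  toFun g := (ρ g).prodMap (σ g)
  map_one' := by ext <;> simp
  map_mul' g h := by ext <;> simp

/-- Isomorphism of `G`-representations. -/
def RepIso {V W : Type} [AddCommGroup V] [Module ℝ V] [AddCommGroup W] [Module ℝ W]
    (ρ : Representation ℝ G V) (σ : Representation ℝ G W) : Prop :=
  ∃ e : V ≃ₗ[ℝ] W, ∀ (g : G) (v : V), e (ρ g v) = σ g (e v)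

/-- Two real representations `ρ₁`, `ρ₂` of `G` are stably equivalent if there are
affine quotients `ρ₁'` of `ρ₁` and `ρ₂'` of `ρ₂` (i.e. `ker°ρᵢ ⊆ ker°ρᵢ'`) with
`ρ₁ ⊕ ρ₁' ≅ ρ₂ ⊕ ρ₂'` as `G`-representations. -/
def StablyEquivalent {V W : Type} [AddCommGroup V] [Module ℝ V] [AddCommGroup W] [Module ℝ W]
    (ρ₁ : Representation ℝ G V) (ρ₂ : Representation ℝ G W) : Prop :=
  ∃ (V' : Type) (_ : AddCommGroup V') (_ : Module ℝ V') (ρ₁' : Representation ℝ G V')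
    (W' : Type) (_ : AddCommGroup W') (_ : Module ℝ W') (ρ₂' : Representation ℝ G W'),
    affKer ρ₁ ⊆ affKer ρ₁' ∧ affKer ρ₂ ⊆ affKer ρ₂' ∧
    RepIso (prodRep ρ₁ ρ₁') (prodRep ρ₂ ρ₂')

/-- `θ` occurs as a direct summand (irreducible factor, when `θ` is irreducible)
of `ρ`: there are equivariant maps `i : W → V` and `p : V → W` with `p ∘ i = id`. -/
def IsSummand {V W : Type} [AddCommGroup V] [Module ℝ V] [AddCommGroup W] [Module ℝ W]
    (θ : Representation ℝ G W) (ρ : Representation ℝ G V) : Prop :=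
  ∃ (i : W →ₗ[ℝ] V) (p : V →ₗ[ℝ] W),
    (∀ (g : G) (w : W), i (θ g w) = ρ g (i w)) ∧
    (∀ (g : G) (v : V), p (ρ g v) = θ g (p v)) ∧
    p ∘ₗ i = LinearMap.id

/-- A representation is irreducible: the space is nonzero and has no proper nonzero
`G`-invariant subspace. -/
def IsIrreducibleRep {W : Type} [AddCommGroup W] [Module ℝ W]
    (θ : Representation ℝ G W) : Prop :=
  (∃ w : W, w ≠ 0) ∧
  ∀ U : Submodule ℝ W, (∀ g : G, ∀ x ∈ U, θ g x ∈ U) → U = ⊥ ∨ U = ⊤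

set_option linter.unusedSectionVars false

namespace StableAux

variable {V W V' W' : Type} [AddCommGroup V] [Module ℝ V] [AddCommGroup W] [Module ℝ W]
  [AddCommGroup V'] [Module ℝ V'] [AddCommGroup W'] [Module ℝ W']

lemma prodRep_apply (ρ : Representation ℝ G V) (σ : Representation ℝ G W) (g : G) (x : V × W) :
    prodRep ρ σ g x = (ρ g x.1, σ g x.2) := rfl

lemma schur_bijective {θ : Representation ℝ G W} (hirr : IsIrreducibleRep θ) (f : W →ₗ[ℝ] W)
    (hf : ∀ g w, f (θ g w) = θ g (f w)) (h0 : f ≠ 0) : Function.Bijective f := by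
  constructor
  · rw [← LinearMap.ker_eq_bot]
    rcases hirr.2 (LinearMap.ker f) (fun g x hx => by
      simp only [LinearMap.mem_ker] at hx ⊢
      rw [hf, hx, map_zero]) with h | h
    · exact h
    · exact absurd (LinearMap.ext fun w => by
        simpa using (h ▸ Submodule.mem_top : w ∈ LinearMap.ker f)) h0
  · rw [← LinearMap.range_eq_top]
    rcases hirr.2 (LinearMap.range f) (fun g x hx => by
      obtain ⟨y, rfl⟩ := hx
      exact ⟨θ g y, hf g y⟩) with h | h
    · exact absurd (LinearMap.ext fun w => by
        simpa using (h ▸ LinearMap.mem_range_self f w : f w ∈ (⊥ : Submodule ℝ W))) h0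
    · exact h

lemma isSummand_congr {ρ : Representation ℝ G V} {σ : Representation ℝ G V'}
    {θ : Representation ℝ G W} (hiso : RepIso ρ σ) (h : IsSummand θ ρ) : IsSummand θ σ := by
  obtain ⟨e, he⟩ := hiso
  obtain ⟨i, p, hi, hp, hpi⟩ := h
  have hesymm : ∀ (g : G) (v : V'), e.symm (σ g v) = ρ g (e.symm v) := by
    intro g v
    apply e.injective
    rw [he, e.apply_symm_apply, e.apply_symm_apply]
  refine ⟨e.toLinearMap ∘ₗ i, p ∘ₗ e.symm.toLinearMap, ?_, ?_, ?_⟩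
  · intro g w; simp [hi, he]
  · intro g v; simp [hesymm, hp]
  · ext w; simpa using LinearMap.congr_fun hpi w

lemma isSummand_prod_left {ρ : Representation ℝ G V} {σ : Representation ℝ G V'}
    {θ : Representation ℝ G W} (h : IsSummand θ ρ) : IsSummand θ (prodRep ρ σ) := by
  obtain ⟨i, p, hi, hp, hpi⟩ := h
  refine ⟨(LinearMap.inl ℝ V V') ∘ₗ i, p ∘ₗ (LinearMap.fst ℝ V V'), ?_, ?_, ?_⟩
  · intro g w; simp [prodRep_apply, hi]
  · intro g v; simp [prodRep_apply, hp]
  · ext w; simpa using LinearMap.congr_fun hpi w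

lemma isSummand_of_retraction {θ : Representation ℝ G W} {τ : Representation ℝ G V}
    (hirr : IsIrreducibleRep θ) (iW : W →ₗ[ℝ] V) (pW : V →ₗ[ℝ] W)
    (hiW : ∀ (g : G) (w : W), iW (θ g w) = τ g (iW w))
    (hpW : ∀ (g : G) (v : V), pW (τ g v) = θ g (pW v))
    (hne0 : pW ∘ₗ iW ≠ 0) : IsSummand θ τ := by
  have hbij : Function.Bijective (pW ∘ₗ iW) :=
    schur_bijective hirr _ (fun g w => by simp [hiW, hpW]) hne0
  set e := LinearEquiv.ofBijective _ hbij with he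
  have hee : ∀ w, e w = pW (iW w) := fun w => rfl
  have hesymm : ∀ (g : G) (w : W), e.symm (θ g w) = θ g (e.symm w) := by
    intro g w
    apply e.injective
    rw [e.apply_symm_apply, hee, hiW, hpW, ← hee, e.apply_symm_apply]
  refine ⟨iW, e.symm.toLinearMap ∘ₗ pW, hiW, ?_, ?_⟩
  · intro g v; simp [hpW, hesymm]
  · ext w
    show e.symm (pW (iW w)) = w
    rw [← hee]
    exact e.symm_apply_apply w

lemma isSummand_prod_elim {ρ : Representation ℝ G V} {σ : Representation ℝ G V'}
    {θ : Representation ℝ G W} (hirr : IsIrreducibleRep θ)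
    (h : IsSummand θ (prodRep ρ σ)) : IsSummand θ ρ ∨ IsSummand θ σ := by
  obtain ⟨i, p, hi, hp, hpi⟩ := h
  set i₁ : W →ₗ[ℝ] V := (LinearMap.fst ℝ V V') ∘ₗ i with hi₁
  set i₂ : W →ₗ[ℝ] V' := (LinearMap.snd ℝ V V') ∘ₗ i with hi₂
  set p₁ : V →ₗ[ℝ] W := p ∘ₗ (LinearMap.inl ℝ V V') with hp₁
  set p₂ : V' →ₗ[ℝ] W := p ∘ₗ (LinearMap.inr ℝ V V') with hp₂
  have hi₁e : ∀ (g : G) (w : W), i₁ (θ g w) = ρ g (i₁ w) := by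
    intro g w; simp [hi₁, hi, prodRep_apply]
  have hi₂e : ∀ (g : G) (w : W), i₂ (θ g w) = σ g (i₂ w) := by
    intro g w; simp [hi₂, hi, prodRep_apply]
  have hp₁e : ∀ (g : G) (v : V), p₁ (ρ g v) = θ g (p₁ v) := by
    intro g v
    have := hp g (v, 0)
    simpa [hp₁, prodRep_apply] using this
  have hp₂e : ∀ (g : G) (v : V'), p₂ (σ g v) = θ g (p₂ v) := by
    intro g v
    have := hp g (0, v)
    simpa [hp₂, prodRep_apply] using this
  have hsum : ∀ w : W, p₁ (i₁ w) + p₂ (i₂ w) = w := by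
    intro w
    have h1 : ((i w).1, (0 : V')) + ((0 : V), (i w).2) = i w := by ext <;> simp
    have h2 : p₁ (i₁ w) + p₂ (i₂ w) = p (((i w).1, 0) + ((0 : V), (i w).2)) := by
      rw [map_add]; rfl
    rw [h2, h1]
    exact LinearMap.congr_fun hpi w
  have hne : p₁ ∘ₗ i₁ ≠ 0 ∨ p₂ ∘ₗ i₂ ≠ 0 := by
    by_contra hcon
    push_neg at hcon
    obtain ⟨w₀, hw₀⟩ := hirr.1
    apply hw₀
    have := hsum w₀
    rw [show p₁ (i₁ w₀) = (p₁ ∘ₗ i₁) w₀ from rfl, show p₂ (i₂ w₀) = (p₂ ∘ₗ i₂) w₀ from rfl,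
      hcon.1, hcon.2] at this
    simpa using this.symm
  rcases hne with h | h
  · exact Or.inl (isSummand_of_retraction hirr i₁ p₁ hi₁e hp₁e h)
  · exact Or.inr (isSummand_of_retraction hirr i₂ p₂ hi₂e hp₂e h)

section ModuleGlue

open MonoidAlgebra Representation

instance : NeZero ((Fintype.card G : ℝ)) := ⟨Nat.cast_ne_zero.mpr Fintype.card_ne_zero⟩

variable (ρ : Representation ℝ G V) (θ : Representation ℝ G W)

lemma asModule_smul_def (a : MonoidAlgebra ℝ G) (v : ρ.asModule) :
    a • v = ρ.asAlgebraHom a (v : V) := rfl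

lemma asModule_single_smul (g : G) (v : ρ.asModule) :
    (MonoidAlgebra.single g (1:ℝ)) • v = ρ g (v : V) := by
  show ρ.asAlgebraHom _ _ = _
  rw [Representation.asAlgebraHom_single, one_smul]

instance : IsScalarTower ℝ (MonoidAlgebra ℝ G) ρ.asModule := ⟨fun r a v => by
  show ρ.asAlgebraHom (r • a) v = r • ρ.asAlgebraHom a v
  rw [map_smul]
  rfl⟩

lemma monoidAlgebra_eq_sum_single (a : MonoidAlgebra ℝ G) :
    a = ∑ g : G, MonoidAlgebra.single g (a.coeff g) := by
  apply MonoidAlgebra.coeff_injective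
  rw [MonoidAlgebra.coeff_sum]
  simp only [MonoidAlgebra.coeff_single]
  exact (Finsupp.sum_single _).symm.trans (Finsupp.sum_fintype _ _ fun g => Finsupp.single_zero g)

lemma single_smul_smul {M : Type} [AddCommGroup M] [Module ℝ M]
    [Module (MonoidAlgebra ℝ G) M] [IsScalarTower ℝ (MonoidAlgebra ℝ G) M]
    (g : G) (c : ℝ) (m : M) :
    (MonoidAlgebra.single g c) • m = c • ((MonoidAlgebra.single g (1:ℝ)) • m) := by
  have h : MonoidAlgebra.single g c = c • MonoidAlgebra.single g (1:ℝ) := by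
    rw [MonoidAlgebra.smul_single, smul_eq_mul, mul_one]
  rw [h, smul_assoc]

lemma smul_eq_sum {M : Type} [AddCommGroup M] [Module ℝ M] [Module (MonoidAlgebra ℝ G) M]
    [IsScalarTower ℝ (MonoidAlgebra ℝ G) M] (a : MonoidAlgebra ℝ G) (m : M) :
    a • m = ∑ g : G, a.coeff g • ((MonoidAlgebra.single g (1:ℝ)) • m) := by
  conv_lhs => rw [monoidAlgebra_eq_sum_single a]
  rw [Finset.sum_smul]
  exact Finset.sum_congr rfl fun g _ => single_smul_smul g (a.coeff g) m

lemma asAlgebraHom_sum_single (l : G → ℝ) :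
    ρ.asAlgebraHom (∑ g : G, MonoidAlgebra.single g (l g)) = ∑ g : G, l g • ρ g := by
  rw [map_sum]
  exact Finset.sum_congr rfl fun g _ => Representation.asAlgebraHom_single ρ g (l g)

lemma sum_single_coeff (l : G → ℝ) (g₀ : G) :
    (∑ g : G, MonoidAlgebra.single g (l g)).coeff g₀ = l g₀ := by
  classical
  rw [MonoidAlgebra.coeff_sum, Finset.sum_apply' g₀]
  simp [MonoidAlgebra.coeff_single, Finsupp.single_apply]

/-- The representation attached to a module over the monoid algebra. -/
noncomputable def ofMod (M : Type) [AddCommGroup M] [Module ℝ M]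
    [Module (MonoidAlgebra ℝ G) M] [IsScalarTower ℝ (MonoidAlgebra ℝ G) M] :
    Representation ℝ G M where
  toFun g :=
    { toFun := fun m => (MonoidAlgebra.single g (1:ℝ)) • m
      map_add' := fun x y => smul_add _ x y
      map_smul' := fun r m => by
        show (MonoidAlgebra.single g (1:ℝ)) • (r • m) = r • ((MonoidAlgebra.single g (1:ℝ)) • m)
        rw [← algebraMap_smul (MonoidAlgebra ℝ G) r m, ← mul_smul, ← Algebra.commutes, mul_smul,
          algebraMap_smul] }
  map_one' := by
    ext m
    show (MonoidAlgebra.single (1:G) (1:ℝ)) • m = m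
    rw [← MonoidAlgebra.one_def, one_smul]
  map_mul' g h := by
    ext m
    show (MonoidAlgebra.single (g*h) (1:ℝ)) • m = (MonoidAlgebra.single g (1:ℝ)) •
      ((MonoidAlgebra.single h (1:ℝ)) • m)
    rw [← mul_smul, MonoidAlgebra.single_mul_single, mul_one]

lemma ofMod_apply (M : Type) [AddCommGroup M] [Module ℝ M]
    [Module (MonoidAlgebra ℝ G) M] [IsScalarTower ℝ (MonoidAlgebra ℝ G) M] (g : G) (m : M) :
    ofMod M g m = (MonoidAlgebra.single g (1:ℝ)) • m := rfl

end ModuleGlue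

section Glue2

open MonoidAlgebra Representation

variable {M : Type} [AddCommGroup M] [Module ℝ M] [Module (MonoidAlgebra ℝ G) M]
  [IsScalarTower ℝ (MonoidAlgebra ℝ G) M]

lemma asModule_smul_eq_sum (ρ : Representation ℝ G V) (a : MonoidAlgebra ℝ G) (v : ρ.asModule) :
    a • v = ∑ g : G, a.coeff g • ρ g (v : V) := by
  rw [asModule_smul_def]
  conv_lhs => rw [monoidAlgebra_eq_sum_single a]
  rw [asAlgebraHom_sum_single]
  exact (LinearMap.sum_apply Finset.univ (fun g => a.coeff g • (ρ g : V →ₗ[ℝ] V)) (show V from v) :)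

lemma sum_smul_apply_eq_zero_of_isSummand {ρ : Representation ℝ G V} {θ : Representation ℝ G W}
    (h : IsSummand θ ρ) (l : G → ℝ) (hl : (∑ g : G, l g • (ρ g : V →ₗ[ℝ] V)) = 0) (w : W) :
    ∑ g : G, l g • θ g w = 0 := by
  obtain ⟨i, p, hi, hp, hpi⟩ := h
  have hw : p (i w) = w := by
    have := LinearMap.congr_fun hpi w
    simpa using this
  have key : ∑ g : G, l g • θ g w = p ((∑ g : G, l g • (ρ g : V →ₗ[ℝ] V)) (i w)) := by
    rw [LinearMap.sum_apply, map_sum]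
    refine Finset.sum_congr rfl fun g _ => ?_
    rw [LinearMap.smul_apply, map_smul, hp, hw]
  rw [key, hl]
  simp

lemma isSummand_ofMod {ρ : Representation ℝ G V}
    (i : M →ₗ[MonoidAlgebra ℝ G] ρ.asModule) (p : ρ.asModule →ₗ[MonoidAlgebra ℝ G] M)
    (hpi : ∀ m, p (i m) = m) : IsSummand (ofMod M) ρ := by
  refine ⟨{ toFun := fun m => i m, map_add' := fun x y => map_add i x y,
            map_smul' := fun r x => ?_ },
          { toFun := fun v => p v, map_add' := fun x y => map_add p x y,
            map_smul' := fun r v => ?_ }, ?_, ?_, ?_⟩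
  · show i (r • x) = r • i x
    rw [← algebraMap_smul (MonoidAlgebra ℝ G) r x, map_smul, algebraMap_smul]
  · have key : ∀ v' : ρ.asModule, p (r • v') = r • p v' := fun v' => by
      rw [← algebraMap_smul (MonoidAlgebra ℝ G) r v', map_smul, algebraMap_smul]
    exact key v
  · intro g w
    show i (ofMod M g w) = ρ g (i w)
    rw [ofMod_apply, map_smul, asModule_single_smul]
  · intro g v
    show p (ρ g v) = ofMod M g (p v)
    exact (congrArg p (asModule_single_smul ρ g v)).symm.trans
      ((map_smul p _ _).trans (ofMod_apply M g (p v)).symm)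
  · ext m
    exact hpi m

lemma isSummand_of_asModule_maps {ρ : Representation ℝ G V} {θ : Representation ℝ G W}
    (i : θ.asModule →ₗ[MonoidAlgebra ℝ G] ρ.asModule)
    (p : ρ.asModule →ₗ[MonoidAlgebra ℝ G] θ.asModule)
    (hpi : ∀ w, p (i w) = w) : IsSummand θ ρ := by
  refine ⟨{ toFun := fun w => i w, map_add' := fun x y => map_add i x y,
            map_smul' := fun r x => ?_ },
          { toFun := fun v => p v, map_add' := fun x y => map_add p x y,
            map_smul' := fun r v => ?_ }, ?_, ?_, ?_⟩
  · have key : ∀ x' : θ.asModule, i (r • x') = r • i x' := fun x' => by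
      rw [← algebraMap_smul (MonoidAlgebra ℝ G) r x', map_smul, algebraMap_smul]
    exact key x
  · have key : ∀ v' : ρ.asModule, p (r • v') = r • p v' := fun v' => by
      rw [← algebraMap_smul (MonoidAlgebra ℝ G) r v', map_smul, algebraMap_smul]
    exact key v
  · intro g w
    show i (θ g w) = ρ g (i w)
    exact (congrArg i (asModule_single_smul θ g w)).symm.trans
      ((map_smul i _ _).trans (asModule_single_smul ρ g (i w)))
  · intro g v
    show p (ρ g v) = θ g (p v)
    exact (congrArg p (asModule_single_smul ρ g v)).symm.trans
      ((map_smul p _ _).trans (asModule_single_smul θ g (p v)))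
  · ext m
    exact hpi m

lemma isSimpleModule_of_irreducible (θ : Representation ℝ G W) (hirr : IsIrreducibleRep θ) :
    IsSimpleModule (MonoidAlgebra ℝ G) θ.asModule := by
  obtain ⟨w₀, hw₀⟩ := hirr.1
  have hbt : (⊥ : Submodule (MonoidAlgebra ℝ G) θ.asModule) ≠ ⊤ := by
    intro h
    apply hw₀
    have h0 : ∀ x : θ.asModule, x ∈ (⊥ : Submodule (MonoidAlgebra ℝ G) θ.asModule) → x = 0 :=
      fun x hx => (Submodule.mem_bot _).mp hx
    exact h0 w₀ (by rw [h]; exact Submodule.mem_top)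
  refine { exists_pair_ne := ⟨⊥, ⊤, hbt⟩, eq_bot_or_eq_top := fun p => ?_ }
  let U : Submodule ℝ W :=
    { carrier := {x : W | (show θ.asModule from x) ∈ p}
      add_mem' := fun hx hy => p.add_mem hx hy
      zero_mem' := p.zero_mem
      smul_mem' := fun r x hx => by
        have key : ∀ x' : θ.asModule, x' ∈ p → r • x' ∈ p := fun x' hx' => by
          rw [← algebraMap_smul (MonoidAlgebra ℝ G) r x']
          exact p.smul_mem _ hx'
        exact key x hx }
  have hUinv : ∀ g : G, ∀ x ∈ U, θ g x ∈ U := by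
    intro g x hx
    show θ g x ∈ p
    rw [← asModule_single_smul θ g x]
    exact p.smul_mem _ hx
  rcases hirr.2 U hUinv with h | h
  · left
    rw [Submodule.eq_bot_iff]
    intro x hx
    have : x ∈ U := hx
    rw [h] at this
    exact (Submodule.mem_bot ℝ (M := W)).mp this
  · right
    rw [Submodule.eq_top_iff']
    intro x
    show x ∈ U
    rw [h]
    exact Submodule.mem_top (R := ℝ) (M := W)

lemma irreducible_ofMod (hs : IsSimpleModule (MonoidAlgebra ℝ G) M) :
    IsIrreducibleRep (ofMod (G := G) M) := by
  haveI := hs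
  haveI : Nontrivial M := IsSimpleModule.nontrivial (MonoidAlgebra ℝ G) M
  refine ⟨exists_ne 0, fun U hU => ?_⟩
  let U' : Submodule (MonoidAlgebra ℝ G) M :=
    { carrier := (U : Set M)
      add_mem' := fun hx hy => U.add_mem hx hy
      zero_mem' := U.zero_mem
      smul_mem' := fun a m hm => by
        show a • m ∈ U
        rw [smul_eq_sum a m]
        exact Submodule.sum_mem U fun g _ => Submodule.smul_mem U _ (hU g m hm) }
  rcases eq_bot_or_eq_top U' with h | h
  · left
    rw [Submodule.eq_bot_iff]
    intro x hx
    have : x ∈ U' := hx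
    rw [h] at this
    simpa using this
  · right
    rw [Submodule.eq_top_iff']
    intro x
    have : x ∈ U' := by rw [h]; exact Submodule.mem_top
    exact this

/-- Core lemma: an irreducible representation whose "kernel" contains the kernel of `ρ`
is a direct summand of `ρ`. -/
theorem isSummand_of_ker_le {ρ : Representation ℝ G V} {θ : Representation ℝ G W}
    (hirr : IsIrreducibleRep θ)
    (h : ∀ l : G → ℝ, (∑ g : G, l g • (ρ g : V →ₗ[ℝ] V)) = 0 →
      ∀ w : W, (∑ g : G, l g • θ g w) = 0) :
    IsSummand θ ρ := by
  classical
  haveI : IsSimpleModule (MonoidAlgebra ℝ G) θ.asModule := isSimpleModule_of_irreducible θ hirr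
  have hann : ∀ a : MonoidAlgebra ℝ G, (∀ v : ρ.asModule, a • v = 0) →
      ∀ w : θ.asModule, a • w = 0 := by
    intro a ha w
    have hl : (∑ g : G, a.coeff g • (ρ g : V →ₗ[ℝ] V)) = 0 := by
      ext v
      simp only [LinearMap.sum_apply, LinearMap.smul_apply, LinearMap.zero_apply]
      rw [← asModule_smul_eq_sum ρ a v]
      exact ha v
    rw [asModule_smul_eq_sum θ a w]
    exact h (fun g => a.coeff g) hl w
  haveI : Nontrivial θ.asModule := IsSimpleModule.nontrivial (MonoidAlgebra ℝ G) θ.asModule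
  obtain ⟨w₀, hw₀⟩ := exists_ne (0 : θ.asModule)
  set φ := LinearMap.toSpanSingleton (MonoidAlgebra ℝ G) θ.asModule w₀ with hφ
  have hφ1 : φ 1 = w₀ := by rw [hφ, LinearMap.toSpanSingleton_apply, one_smul]
  have hφsurj : Function.Surjective φ := by
    rw [← LinearMap.range_eq_top]
    rcases eq_bot_or_eq_top (LinearMap.range φ) with h' | h'
    · exfalso
      apply hw₀
      have : w₀ ∈ LinearMap.range φ := ⟨1, hφ1⟩
      rw [h'] at this
      simpa using this
    · exact h'
  obtain ⟨c, hc⟩ := exists_isCompl (LinearMap.ker φ)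
  let ψ : ↥c ≃ₗ[MonoidAlgebra ℝ G] θ.asModule :=
    (Submodule.quotientEquivOfIsCompl _ c hc).symm.trans (φ.quotKerEquivOfSurjective hφsurj)
  haveI : IsSimpleModule (MonoidAlgebra ℝ G) ↥c := IsSimpleModule.congr ψ
  haveI : Nontrivial ↥c := IsSimpleModule.nontrivial (MonoidAlgebra ℝ G) ↥c
  obtain ⟨x, hx⟩ := exists_ne (0 : ↥c)
  have hxφ : φ (x : MonoidAlgebra ℝ G) ≠ 0 := by
    intro h0
    apply hx
    have hmem : (x : MonoidAlgebra ℝ G) ∈ LinearMap.ker φ ⊓ c := ⟨LinearMap.mem_ker.mpr h0, x.2⟩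
    rw [hc.inf_eq_bot] at hmem
    exact Subtype.ext (by simpa using hmem)
  have hxv : ∃ v : ρ.asModule, (x : MonoidAlgebra ℝ G) • v ≠ 0 := by
    by_contra hall
    push_neg at hall
    apply hxφ
    rw [hφ, LinearMap.toSpanSingleton_apply]
    exact hann _ hall w₀
  obtain ⟨v, hv⟩ := hxv
  let χ : ↥c →ₗ[MonoidAlgebra ℝ G] ρ.asModule :=
    { toFun := fun y => (y : MonoidAlgebra ℝ G) • v
      map_add' := fun y z => by
        show ((y + z : ↥c) : MonoidAlgebra ℝ G) • v = _
        rw [Submodule.coe_add, add_smul]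
      map_smul' := fun a y => by
        show ((a • y : ↥c) : MonoidAlgebra ℝ G) • v = a • ((y : MonoidAlgebra ℝ G) • v)
        rw [Submodule.coe_smul, smul_eq_mul, mul_smul] }
  have hχx : χ x ≠ 0 := hv
  have hχinj : Function.Injective χ := by
    rw [← LinearMap.ker_eq_bot]
    rcases eq_bot_or_eq_top (LinearMap.ker χ) with h' | h'
    · exact h'
    · exfalso
      apply hχx
      have : x ∈ LinearMap.ker χ := by rw [h']; exact Submodule.mem_top
      exact this
  let eZ := LinearEquiv.ofInjective χ hχinj
  obtain ⟨q, hq⟩ := exists_isCompl (LinearMap.range χ)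
  let pr := (LinearMap.range χ).projectionOnto q hq
  let i₀ : θ.asModule →ₗ[MonoidAlgebra ℝ G] ρ.asModule :=
    (LinearMap.range χ).subtype ∘ₗ (eZ.toLinearMap ∘ₗ ψ.symm.toLinearMap)
  let p₀ : ρ.asModule →ₗ[MonoidAlgebra ℝ G] θ.asModule :=
    ψ.toLinearMap ∘ₗ (eZ.symm.toLinearMap ∘ₗ pr)
  apply isSummand_of_asModule_maps i₀ p₀
  intro w
  show ψ (eZ.symm (pr ((LinearMap.range χ).subtype (eZ (ψ.symm w))))) = w
  rw [show (LinearMap.range χ).subtype (eZ (ψ.symm w)) = ((eZ (ψ.symm w)) : ρ.asModule) from rfl]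
  rw [Submodule.projectionOnto_apply_left hq (eZ (ψ.symm w))]
  rw [eZ.symm_apply_apply, ψ.apply_symm_apply]

end Glue2

section Final

open MonoidAlgebra Representation

lemma repIso_symm {ρ : Representation ℝ G V} {σ : Representation ℝ G W}
    (h : RepIso ρ σ) : RepIso σ ρ := by
  obtain ⟨e, he⟩ := h
  refine ⟨e.symm, fun g v => ?_⟩
  apply e.injective
  rw [he, e.apply_symm_apply, e.apply_symm_apply]

lemma not_isSummand_one {θ : Representation ℝ G W} (hnt : ∃ g, θ g ≠ LinearMap.id) :
    ¬ IsSummand θ (1 : Representation ℝ G ℝ) := by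
  rintro ⟨i, p, hi, hp, hpi⟩
  obtain ⟨g, hg⟩ := hnt
  apply hg
  ext w
  have h1 : p (i w) = w := by simpa using LinearMap.congr_fun hpi w
  show θ g w = w
  calc θ g w = θ g (p (i w)) := by rw [h1]
    _ = p ((1 : Representation ℝ G ℝ) g (i w)) := (hp g (i w)).symm
    _ = p (i w) := rfl
    _ = w := h1

lemma affKer_prod_one (ρ : Representation ℝ G V) (l : G → ℝ) :
    (∑ g : G, l g • ((prodRep ρ (1 : Representation ℝ G ℝ)) g : V × ℝ →ₗ[ℝ] V × ℝ)) = 0 ↔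
      l ∈ affKer ρ := by
  have key : ∀ (v : V) (t : ℝ),
      (∑ g : G, l g • ((prodRep ρ (1 : Representation ℝ G ℝ)) g : V × ℝ →ₗ[ℝ] V × ℝ)) (v, t)
        = (∑ g : G, l g • ρ g v, (∑ g : G, l g) • t) := by
    intro v t
    rw [LinearMap.sum_apply, Finset.sum_smul]
    refine Prod.ext ?_ ?_
    · rw [Prod.fst_sum]
      simp [prodRep_apply]
    · rw [Prod.snd_sum]
      refine Finset.sum_congr rfl fun g _ => ?_
      show (l g • ((prodRep ρ (1 : Representation ℝ G ℝ)) g (v, t))).2 = l g • t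
      rw [prodRep_apply]
      show l g • ((1 : Representation ℝ G ℝ) g t) = l g • t
      rfl
  constructor
  · intro h
    constructor
    · ext v
      have := LinearMap.congr_fun h (v, 0)
      rw [key v 0] at this
      simpa [LinearMap.sum_apply, Prod.ext_iff] using this
    · have := LinearMap.congr_fun h (0, 1)
      rw [key 0 1] at this
      simpa [Prod.ext_iff] using this
  · rintro ⟨h1, h2⟩
    apply LinearMap.ext
    rintro ⟨v, t⟩
    rw [key v t, h2]
    have h1' : (∑ g : G, l g • ρ g v) = 0 := by
      have := LinearMap.congr_fun h1 v
      simpa [LinearMap.sum_apply] using this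
    simp [h1']

lemma forward_half {V₁ V₂ VA VB : Type}
    [AddCommGroup V₁] [Module ℝ V₁] [AddCommGroup V₂] [Module ℝ V₂]
    [AddCommGroup VA] [Module ℝ VA] [AddCommGroup VB] [Module ℝ VB]
    (ρ₁ : Representation ℝ G V₁) (ρ₂ : Representation ℝ G V₂)
    (ρ₁' : Representation ℝ G VA) (ρ₂' : Representation ℝ G VB)
    (h2 : affKer ρ₂ ⊆ affKer ρ₂')
    (hiso : RepIso (prodRep ρ₁ ρ₁') (prodRep ρ₂ ρ₂'))
    {W : Type} [AddCommGroup W] [Module ℝ W] (θ : Representation ℝ G W)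
    (hirr : IsIrreducibleRep θ) (hnt : ∃ g : G, θ g ≠ LinearMap.id)
    (hs : IsSummand θ ρ₁) : IsSummand θ ρ₂ := by
  have hs2 : IsSummand θ (prodRep ρ₂ ρ₂') := isSummand_congr hiso (isSummand_prod_left hs)
  rcases isSummand_prod_elim hirr hs2 with h | h
  · exact h
  · have hker : ∀ l : G → ℝ,
        (∑ g : G, l g • ((prodRep ρ₂ (1 : Representation ℝ G ℝ)) g : V₂ × ℝ →ₗ[ℝ] V₂ × ℝ)) = 0 →
        ∀ w : W, (∑ g : G, l g • θ g w) = 0 := by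
      intro l hl w
      have hmem : l ∈ affKer ρ₂ := (affKer_prod_one ρ₂ l).mp hl
      exact sum_smul_apply_eq_zero_of_isSummand h l (h2 hmem).1 w
    have hsum := isSummand_of_ker_le hirr hker
    rcases isSummand_prod_elim hirr hsum with h' | h'
    · exact h'
    · exact absurd h' (not_isSummand_one hnt)

lemma affKer_subset_of_summand_mono {V₁ V₂ : Type}
    [AddCommGroup V₁] [Module ℝ V₁] [AddCommGroup V₂] [Module ℝ V₂]
    (ρ₁ : Representation ℝ G V₁) (ρ₂ : Representation ℝ G V₂)
    (hsum : ∀ (W : Type) [AddCommGroup W] [Module ℝ W] (θ : Representation ℝ G W),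
      IsIrreducibleRep θ → (∃ g : G, θ g ≠ LinearMap.id) → IsSummand θ ρ₂ → IsSummand θ ρ₁) :
    affKer ρ₁ ⊆ affKer ρ₂ := by
  classical
  rintro l ⟨hρ, hl⟩
  refine ⟨?_, hl⟩
  set a : MonoidAlgebra ℝ G := ∑ g : G, MonoidAlgebra.single g (l g) with ha
  have hacoeff : ∀ g : G, a.coeff g = l g := fun g => by rw [ha, sum_single_coeff]
  suffices hkey : ∀ v : ρ₂.asModule, a • v = 0 by
    ext v
    simp only [LinearMap.sum_apply, LinearMap.smul_apply, LinearMap.zero_apply]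
    have hv := hkey v
    rw [asModule_smul_eq_sum ρ₂ a v] at hv
    calc ∑ g : G, l g • ρ₂ g v = ∑ g : G, a.coeff g • ρ₂ g v :=
          Finset.sum_congr rfl fun g _ => by rw [hacoeff]
      _ = 0 := hv
  intro v
  have htop := IsSemisimpleModule.sSup_simples_eq_top (MonoidAlgebra ℝ G) ρ₂.asModule
  have hv : v ∈ sSup {m : Submodule (MonoidAlgebra ℝ G) ρ₂.asModule |
      IsSimpleModule (MonoidAlgebra ℝ G) ↥m} := by
    rw [htop]; exact Submodule.mem_top
  rw [sSup_eq_iSup'] at hv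
  refine Submodule.iSup_induction (motive := fun y => a • y = 0) _ hv (fun Sp x hx => ?_)
    (smul_zero a) (fun x y hx hy => by
      show a • (x + y) = 0
      rw [smul_add, show a • x = 0 from hx, show a • y = 0 from hy, add_zero])
  obtain ⟨S, hS⟩ := Sp
  by_cases htriv : ∀ (g : G) (y : ↥S), (MonoidAlgebra.single g (1:ℝ)) • y = y
  · rw [smul_eq_sum a x]
    have hfix : ∀ g : G, (MonoidAlgebra.single g (1:ℝ)) • x = x := by
      intro g
      have h' := htriv g ⟨x, hx⟩
      have hcoe : (((MonoidAlgebra.single g (1:ℝ)) • (⟨x, hx⟩ : ↥S) : ↥S) : ρ₂.asModule)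
          = (MonoidAlgebra.single g (1:ℝ)) • x := rfl
      rw [← hcoe, h']
    calc ∑ g : G, a.coeff g • ((MonoidAlgebra.single g (1:ℝ)) • x) = ∑ g : G, l g • x := by
          refine Finset.sum_congr rfl fun g _ => ?_
          rw [hfix, hacoeff]
      _ = (∑ g : G, l g) • x := (Finset.sum_smul).symm
      _ = 0 := by rw [hl, zero_smul]
  · push_neg at htriv
    obtain ⟨g₀, y₀, hy₀⟩ := htriv
    haveI := hS
    have hirr := irreducible_ofMod (M := ↥S) hS
    have hnt : ∃ g : G, ofMod (G := G) ↥S g ≠ LinearMap.id := by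
      refine ⟨g₀, fun he => hy₀ ?_⟩
      have := LinearMap.congr_fun he y₀
      rwa [ofMod_apply] at this
    have hsummand₂ : IsSummand (ofMod (G := G) ↥S) ρ₂ := by
      obtain ⟨q, hq⟩ := exists_isCompl S
      exact isSummand_ofMod S.subtype (S.projectionOnto q hq)
        (fun m => Submodule.projectionOnto_apply_left hq m)
    have hsummand₁ := hsum _ (ofMod (G := G) ↥S) hirr hnt hsummand₂
    have hθ : ∀ m : ↥S, (∑ g : G, l g • (ofMod (G := G) ↥S) g m) = 0 :=
      fun m => sum_smul_apply_eq_zero_of_isSummand hsummand₁ l hρ m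
    rw [smul_eq_sum a x]
    have hcoe : ∀ g : G, (MonoidAlgebra.single g (1:ℝ)) • x
        = (((ofMod (G := G) ↥S) g ⟨x, hx⟩ : ↥S) : ρ₂.asModule) := fun g => rfl
    calc ∑ g : G, a.coeff g • ((MonoidAlgebra.single g (1:ℝ)) • x)
        = ∑ g : G, l g • ((((ofMod (G := G) ↥S) g ⟨x, hx⟩ : ↥S) : ρ₂.asModule)) := by
          refine Finset.sum_congr rfl fun g _ => ?_
          rw [hacoeff, hcoe]
      _ = (((∑ g : G, l g • (ofMod (G := G) ↥S) g ⟨x, hx⟩ : ↥S)) : ρ₂.asModule) := by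
          rw [Submodule.coe_sum]
          exact Finset.sum_congr rfl fun g _ => (Submodule.coe_smul_of_tower _ _).symm
      _ = 0 := by rw [hθ ⟨x, hx⟩, Submodule.coe_zero]

end Final

end StableAux

/-- Baumeister et al., Thm. 2.4. Two real representations of a finite
group `G` are stably equivalent if and only if they contain the same non-trivial
irreducible factors. -/
theorem stablyEquivalent_iff_same_nontrivial_irreducible_factors
    {V₁ V₂ : Type} [AddCommGroup V₁] [Module ℝ V₁] [FiniteDimensional ℝ V₁]
    [AddCommGroup V₂] [Module ℝ V₂] [FiniteDimensional ℝ V₂]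
    (ρ₁ : Representation ℝ G V₁) (ρ₂ : Representation ℝ G V₂) :
    StablyEquivalent ρ₁ ρ₂ ↔
      ∀ (W : Type) [AddCommGroup W] [Module ℝ W] (θ : Representation ℝ G W),
        IsIrreducibleRep θ → (∃ g : G, θ g ≠ LinearMap.id) →
        (IsSummand θ ρ₁ ↔ IsSummand θ ρ₂) := by
  constructor
  · rintro ⟨VA, hA1, hA2, ρ₁', VB, hB1, hB2, ρ₂', h1, h2, hiso⟩ W _ _ θ hirr hnt
    letI := hA1; letI := hA2; letI := hB1; letI := hB2
    constructor
    · exact StableAux.forward_half ρ₁ ρ₂ ρ₁' ρ₂' h2 hiso θ hirr hnt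
    · exact StableAux.forward_half ρ₂ ρ₁ ρ₂' ρ₁' h1 (StableAux.repIso_symm hiso) θ hirr hnt
  · intro h
    refine ⟨V₂, inferInstance, inferInstance, ρ₂, V₁, inferInstance, inferInstance, ρ₁,
      ?_, ?_, ?_⟩
    · exact StableAux.affKer_subset_of_summand_mono ρ₁ ρ₂
        (fun W _ _ θ hirr hnt hs => (h W θ hirr hnt).mpr hs)
    · exact StableAux.affKer_subset_of_summand_mono ρ₂ ρ₁
        (fun W _ _ θ hirr hnt hs => (h W θ hirr hnt).mp hs)
    · exact ⟨LinearEquiv.prodComm ℝ V₁ V₂, fun g v => rfl⟩
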